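/- If G is a finite simple graph and X_γ(G) < 2^{γ(G)−1}, where X_γ(G) denotes the number of γ-sets of G, then γ_MB(G) > γ(G). -/

import Mathlib

variable {V : Type*}

/-- `D` dominates every vertex of `G` outside of `A`: each such vertex lies in the
closed neighborhood of some member of `D`. (Take `A = ∅` for ordinary domination.) -/
def Dominates (G : SimpleGraph V) (A : Set V) (D : Finset V) : Prop :=
  ∀ v : V, v ∉ A → ∃ u ∈ D, u = v ∨ G.Adj u v

/-- `MBWin G A t k D S`: in the Maker-Breaker domination game on `G` where the vertices of
`A` are regarded as already dominated, with `D` the set of vertices selected so far by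
Dominator, `S` the set selected so far by Staller, and where it is Dominator's turn if
`t = true` and Staller's turn if `t = false`, Dominator has a strategy guaranteeing that
his selected vertices dominate `V \ A` after he selects at most `k` further vertices.
Players alternately select vertices not previously selected by either player; if no
unselected vertex remains and Dominator's vertices do not dominate, Dominator has lost. -/
inductive MBWin [Fintype V] [DecidableEq V] (G : SimpleGraph V) (A : Set V) :
    Bool → ℕ → Finset V → Finset V → Prop
  | win (t : Bool) (k : ℕ) (D S : Finset V) : Dominates G A D → MBWin G A t k D S
  | dmove (k : ℕ) (D S : Finset V) (v : V) : v ∉ D → v ∉ S →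
      MBWin G A false k (insert v D) S → MBWin G A true (k + 1) D S
  | smove (k : ℕ) (D S : Finset V) : D ∪ S ≠ Finset.univ →
      (∀ v, v ∉ D → v ∉ S → MBWin G A true k D (insert v S)) → MBWin G A false k D S

/-- The Maker-Breaker domination number `γ_MB(G|A)` of the game in which the vertices of `A`
are regarded as already dominated and Dominator moves first: the minimum `m` such that
Dominator has a winning strategy using at most `m` of his own moves, and `⊤ = ∞` if
Dominator has no winning strategy. -/
noncomputable def gammaMBRes [Fintype V] [DecidableEq V] (G : SimpleGraph V) (A : Set V) :
    ℕ∞ :=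
  sInf ((fun m : ℕ => (m : ℕ∞)) '' {m : ℕ | MBWin G A true m ∅ ∅})

/-- `γ_MB'(G|A)`: as `gammaMBRes`, but Staller moves first. -/
noncomputable def gammaMBRes' [Fintype V] [DecidableEq V] (G : SimpleGraph V) (A : Set V) :
    ℕ∞ :=
  sInf ((fun m : ℕ => (m : ℕ∞)) '' {m : ℕ | MBWin G A false m ∅ ∅})

/-- The Maker-Breaker domination number `γ_MB(G)` (Dominator moves first). -/
noncomputable def gammaMB [Fintype V] [DecidableEq V] (G : SimpleGraph V) : ℕ∞ :=
  gammaMBRes G ∅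

/-- The Staller-start Maker-Breaker domination number `γ_MB'(G)`. -/
noncomputable def gammaMB' [Fintype V] [DecidableEq V] (G : SimpleGraph V) : ℕ∞ :=
  gammaMBRes' G ∅

/-- The domination number `γ(G)`: the minimum size of a dominating set of `G`. -/
noncomputable def dominationNumber [Fintype V] (G : SimpleGraph V) : ℕ :=
  sInf {m : ℕ | ∃ D : Finset V, Dominates G ∅ D ∧ D.card = m}

/-- A `γ`-set of `G`: a dominating set of minimum size. -/
def IsGammaSet [Fintype V] (G : SimpleGraph V) (D : Finset V) : Prop :=
  Dominates G ∅ D ∧ D.card = dominationNumber G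

section Aux

variable [Fintype V] [DecidableEq V]

lemma gamma_le_card (G : SimpleGraph V) {T : Finset V} (hT : Dominates G ∅ T) :
    dominationNumber G ≤ T.card :=
  Nat.sInf_le ⟨T, hT, rfl⟩

/-- The family of dominating sets extending `D`, avoiding `S`, of size at most `n`. -/
def Fam (G : SimpleGraph V) (D S : Finset V) (n : ℕ) : Set (Finset V) :=
  {T | Dominates G ∅ T ∧ D ⊆ T ∧ Disjoint T S ∧ T.card ≤ n}

lemma mbwin_false_zero {G : SimpleGraph V} {D S : Finset V}
    (h : MBWin G ∅ false 0 D S) : Dominates G ∅ D := by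
  cases h with
  | win _ _ _ _ hd => exact hd
  | smove _ _ _ hne hall =>
      obtain ⟨v, hv⟩ : ∃ v, v ∉ D ∪ S := by
        by_contra hc
        push_neg at hc
        exact hne (Finset.eq_univ_iff_forall.2 hc)
      simp only [Finset.mem_union, not_or] at hv
      have h2 := hall v hv.1 hv.2
      cases h2 with
      | win _ _ _ _ hd => exact hd

lemma key (G : SimpleGraph V) : ∀ k : ℕ,
    (∀ D S : Finset V, MBWin G ∅ true k D S → ¬ Dominates G ∅ D → Disjoint D S →
      D.card + k ≤ dominationNumber G →
      ∃ v, v ∉ D ∧ v ∉ S ∧ 2 ^ (k - 1) ≤ (Fam G (insert v D) S (D.card + k)).ncard) ∧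
    (∀ D S : Finset V, MBWin G ∅ false k D S → ¬ Dominates G ∅ D → Disjoint D S →
      D.card + k ≤ dominationNumber G →
      2 ^ k ≤ (Fam G D S (D.card + k)).ncard) := by
  intro k
  induction k using Nat.strong_induction_on with
  | _ k IH =>
  have partA : ∀ D S : Finset V, MBWin G ∅ true k D S → ¬ Dominates G ∅ D → Disjoint D S →
      D.card + k ≤ dominationNumber G →
      ∃ v, v ∉ D ∧ v ∉ S ∧ 2 ^ (k - 1) ≤ (Fam G (insert v D) S (D.card + k)).ncard := by
    intro D S h hd hDS hle
    cases h with
    | win _ _ _ _ hdom => exact absurd hdom hd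
    | dmove k' _ _ v hvD hvS hw =>
        refine ⟨v, hvD, hvS, ?_⟩
        have hc : (insert v D).card = D.card + 1 := Finset.card_insert_of_notMem hvD
        have hdisj : Disjoint (insert v D) S :=
          Finset.disjoint_insert_left.mpr ⟨hvS, hDS⟩
        by_cases hd' : Dominates G ∅ (insert v D)
        · have hγ := gamma_le_card G hd'
          have hk0 : k' = 0 := by omega
          subst hk0
          have hmem : insert v D ∈ Fam G (insert v D) S (D.card + (0 + 1)) :=
            ⟨hd', subset_rfl, hdisj, by omega⟩
          have hpos : 0 < (Fam G (insert v D) S (D.card + (0 + 1))).ncard :=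
            (Set.ncard_pos (Set.toFinite _)).mpr ⟨_, hmem⟩
          simpa using Nat.one_le_iff_ne_zero.mpr hpos.ne'
        · have hB := (IH k' (by omega)).2 (insert v D) S hw hd' hdisj (by omega)
          have heq : (insert v D).card + k' = D.card + (k' + 1) := by omega
          rw [heq] at hB
          simpa using hB
  refine ⟨partA, ?_⟩
  intro D S h hd hDS hle
  match k, h with
  | 0, h => exact absurd (mbwin_false_zero h) hd
  | k' + 1, h =>
    cases h with
    | win _ _ _ _ hdom => exact absurd hdom hd
    | smove _ _ _ hne hall =>
        obtain ⟨s₁, hs₁⟩ : ∃ v, v ∉ D ∪ S := by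
          by_contra hc
          push_neg at hc
          exact hne (Finset.eq_univ_iff_forall.2 hc)
        simp only [Finset.mem_union, not_or] at hs₁
        have h1 := hall s₁ hs₁.1 hs₁.2
        obtain ⟨v₁, hv₁D, hv₁S', hF₁⟩ := partA D (insert s₁ S) h1 hd
          (Finset.disjoint_insert_right.mpr ⟨hs₁.1, hDS⟩) hle
        have hv₁S : v₁ ∉ S := fun hx => hv₁S' (Finset.mem_insert_of_mem hx)
        have h2 := hall v₁ hv₁D hv₁S
        obtain ⟨v₂, hv₂D, hv₂S', hF₂⟩ := partA D (insert v₁ S) h2 hd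
          (Finset.disjoint_insert_right.mpr ⟨hv₁D, hDS⟩) hle
        set n := D.card + (k' + 1) with hn
        set F₁ := Fam G (insert v₁ D) (insert s₁ S) n with hF₁def
        set F₂ := Fam G (insert v₂ D) (insert v₁ S) n with hF₂def
        have hsub₁ : F₁ ⊆ Fam G D S n := by
          rintro T ⟨hdom, hsubset, hdisj, hcard⟩
          exact ⟨hdom, (Finset.subset_insert _ _).trans hsubset,
            hdisj.mono_right (Finset.subset_insert _ _), hcard⟩
        have hsub₂ : F₂ ⊆ Fam G D S n := by
          rintro T ⟨hdom, hsubset, hdisj, hcard⟩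
          exact ⟨hdom, (Finset.subset_insert _ _).trans hsubset,
            hdisj.mono_right (Finset.subset_insert _ _), hcard⟩
        have hdisjF : Disjoint F₁ F₂ := by
          rw [Set.disjoint_left]
          rintro T ⟨_, hsubset, _, _⟩ ⟨_, _, hdisj, _⟩
          have hv₁T : v₁ ∈ T := hsubset (Finset.mem_insert_self _ _)
          exact (Finset.disjoint_right.mp hdisj (Finset.mem_insert_self _ _)) hv₁T
        have hunion : (F₁ ∪ F₂).ncard = F₁.ncard + F₂.ncard :=
          Set.ncard_union_eq hdisjF (Set.toFinite _) (Set.toFinite _)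
        have hmono : (F₁ ∪ F₂).ncard ≤ (Fam G D S n).ncard :=
          Set.ncard_le_ncard (Set.union_subset hsub₁ hsub₂) (Set.toFinite _)
        have hexp : 2 ^ (k' + 1) = 2 ^ (k' + 1 - 1) + 2 ^ (k' + 1 - 1) := by
          simp [pow_succ]; ring
        calc 2 ^ (k' + 1) = 2 ^ (k' + 1 - 1) + 2 ^ (k' + 1 - 1) := hexp
          _ ≤ F₁.ncard + F₂.ncard := add_le_add hF₁ hF₂
          _ = (F₁ ∪ F₂).ncard := hunion.symm
          _ ≤ (Fam G D S n).ncard := hmono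

end Aux

/-- If `G` is a finite simple graph and the number `X_γ(G)` of `γ`-sets of `G` is less than
`2 ^ (γ(G) - 1)`, then `γ_MB(G) > γ(G)`. -/
theorem gammaMB_gt_gamma_of_few_gamma_sets [Fintype V] [DecidableEq V] (G : SimpleGraph V)
    (h : Set.ncard {D : Finset V | IsGammaSet G D} < 2 ^ (dominationNumber G - 1)) :
    (dominationNumber G : ℕ∞) < gammaMB G := by
  by_cases hd0 : Dominates G ∅ (∅ : Finset V)
  · exfalso
    have hγ0 : dominationNumber G = 0 :=
      Nat.le_zero.mp (by simpa using gamma_le_card G hd0)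
    have hmem : (∅ : Finset V) ∈ {D : Finset V | IsGammaSet G D} :=
      ⟨hd0, by simp [hγ0]⟩
    have hpos : 0 < ({D : Finset V | IsGammaSet G D}).ncard :=
      (Set.ncard_pos (Set.toFinite _)).mpr ⟨_, hmem⟩
    rw [hγ0] at h
    simp at h
    omega
  · have key2 : ∀ m : ℕ, MBWin G ∅ true m ∅ ∅ → dominationNumber G < m := by
      intro m hm
      by_contra hle
      push_neg at hle
      obtain ⟨v, _, _, hF⟩ := (key G m).1 ∅ ∅ hm hd0 (by simp)
        (by simpa using hle)
      have hfin : (Fam G (insert v (∅ : Finset V)) ∅ ((∅ : Finset V).card + m)).Nonempty := by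
        rw [← Set.ncard_pos (Set.toFinite _)]
        calc 0 < 2 ^ (m - 1) := by positivity
          _ ≤ _ := hF
      obtain ⟨T, hTdom, _, _, hTcard⟩ := hfin
      have hγT := gamma_le_card G hTdom
      simp only [Finset.card_empty, zero_add] at hTcard
      have hmγ : m = dominationNumber G := by omega
      have hsub : Fam G (insert v (∅ : Finset V)) ∅ ((∅ : Finset V).card + m) ⊆
          {D : Finset V | IsGammaSet G D} := by
        rintro T' ⟨hdom', _, _, hcard'⟩
        have := gamma_le_card G hdom'
        simp only [Finset.card_empty, zero_add] at hcard'
        exact ⟨hdom', by omega⟩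
      have hle2 : 2 ^ (m - 1) ≤ ({D : Finset V | IsGammaSet G D}).ncard :=
        le_trans hF (Set.ncard_le_ncard hsub (Set.toFinite _))
      rw [hmγ] at hle2
      omega
    have hstep : (dominationNumber G : ℕ∞) + 1 ≤ gammaMB G := by
      unfold gammaMB gammaMBRes
      refine le_sInf ?_
      rintro x ⟨m, hm, rfl⟩
      show (dominationNumber G : ℕ∞) + 1 ≤ (m : ℕ∞)
      exact_mod_cast key2 m hm
    calc (dominationNumber G : ℕ∞) < (dominationNumber G : ℕ∞) + 1 := by
          exact_mod_cast Nat.lt_succ_self _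
      _ ≤ gammaMB G := hstep
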